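/- For every real β with 0 ≤ β < 1, the minimum over ω ∈ [−π, π] of cos(arg((e^{jω} + √β)/(e^{jω} − √β))), i.e. the minimum of Re(w)/|w| where w = (e^{jω} + √β)/(e^{jω} − √β), equals (1 − β)/(1 + β). -/

import Mathlib

open Real Complex

set_option maxHeartbeats 1000000 in
lemma expr_eq_aux (β : ℝ) (hβ0 : 0 ≤ β) (hβ1 : β < 1) (ω : ℝ) :
    ((Complex.exp (ω * Complex.I) + (Real.sqrt β : ℂ)) /
      (Complex.exp (ω * Complex.I) - (Real.sqrt β : ℂ))).re /
    ‖((Complex.exp (ω * Complex.I) + (Real.sqrt β : ℂ)) /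
      (Complex.exp (ω * Complex.I) - (Real.sqrt β : ℂ)))‖ =
    (1 - β) / Real.sqrt ((1 - β)^2 + 4*β*(Real.sin ω)^2) := by
  set s := Real.sqrt β with hs
  have hs0 : 0 ≤ s := Real.sqrt_nonneg β
  have hs2 : s^2 = β := Real.sq_sqrt hβ0
  have hs1 : s < 1 := by
    rw [hs, show (1:ℝ) = Real.sqrt 1 by simp]
    exact Real.sqrt_lt_sqrt hβ0 hβ1
  set c := Real.cos ω with hc
  set d := Real.sin ω with hd
  have hcd : c^2 + d^2 = 1 := by
    rw [hc, hd]; nlinarith [Real.sin_sq_add_cos_sq ω]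
  set a := Complex.exp (ω * Complex.I) + (s : ℂ) with ha
  set b := Complex.exp (ω * Complex.I) - (s : ℂ) with hb
  have hare : a.re = c + s := by simp [ha, Complex.exp_ofReal_mul_I_re, hc]
  have haim : a.im = d := by simp [ha, Complex.exp_ofReal_mul_I_im, hd]
  have hbre : b.re = c - s := by simp [hb, Complex.exp_ofReal_mul_I_re, hc]
  have hbim : b.im = d := by simp [hb, Complex.exp_ofReal_mul_I_im, hd]
  have hNa : Complex.normSq a = (c+s)^2 + d^2 := by
    rw [Complex.normSq_apply, hare, haim]; ring
  have hNb : Complex.normSq b = (c-s)^2 + d^2 := by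
    rw [Complex.normSq_apply, hbre, hbim]; ring
  have hNbpos : 0 < Complex.normSq b := by
    rw [hNb]; nlinarith
  have hNapos : 0 < Complex.normSq a := by
    rw [hNa]; nlinarith
  have hdivre : (a / b).re = (1 - β) / Complex.normSq b := by
    rw [Complex.div_re, hare, haim, hbre, hbim]
    rw [← add_div]
    congr 1
    nlinarith
  have habs : ‖a / b‖ =
      Real.sqrt (Complex.normSq a) / Real.sqrt (Complex.normSq b) := by
    rw [norm_div, Complex.norm_def, Complex.norm_def]
  rw [hdivre, habs]
  have hsb : Real.sqrt (Complex.normSq b) ^ 2 = Complex.normSq b :=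
    Real.sq_sqrt hNbpos.le
  have hprod : Complex.normSq a * Complex.normSq b = (1-β)^2 + 4*β*d^2 := by
    rw [hNa, hNb]; nlinarith
  have hkey : Real.sqrt (Complex.normSq a) * Real.sqrt (Complex.normSq b) =
      Real.sqrt ((1-β)^2 + 4*β*d^2) := by
    rw [← Real.sqrt_mul hNapos.le, hprod]
  have hbne : Real.sqrt (Complex.normSq b) ≠ 0 := (Real.sqrt_pos.mpr hNbpos).ne'
  have hane : Real.sqrt (Complex.normSq a) ≠ 0 := (Real.sqrt_pos.mpr hNapos).ne'
  rw [← hkey]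
  generalize Real.sqrt (Complex.normSq b) = B at hsb hbne ⊢
  rw [← hsb]
  field_simp

/-- For `0 ≤ β < 1`, the minimum over `ω ∈ [−π, π]` of
`cos(arg((e^{jω} + √β)/(e^{jω} − √β)))`, i.e. of `Re w / |w|` with
`w = (e^{jω} + √β)/(e^{jω} − √β)`, equals `(1 − β)/(1 + β)`. -/
theorem min_cos_arg_heavy_ball (β : ℝ) (hβ0 : 0 ≤ β) (hβ1 : β < 1) :
    IsLeast
      {r : ℝ | ∃ ω ∈ Set.Icc (-Real.pi) Real.pi,
        r = ((Complex.exp (ω * Complex.I) + (Real.sqrt β : ℂ)) /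
              (Complex.exp (ω * Complex.I) - (Real.sqrt β : ℂ))).re /
            ‖((Complex.exp (ω * Complex.I) + (Real.sqrt β : ℂ)) /
              (Complex.exp (ω * Complex.I) - (Real.sqrt β : ℂ)))‖}
      ((1 - β) / (1 + β)) := by
  have hpi := Real.pi_pos
  constructor
  · refine ⟨Real.pi / 2, ⟨by linarith, by linarith⟩, ?_⟩
    rw [expr_eq_aux β hβ0 hβ1, Real.sin_pi_div_two]
    have h : (1 - β)^2 + 4*β*(1:ℝ)^2 = (1+β)^2 := by ring
    rw [h, Real.sqrt_sq (by linarith)]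
  · rintro r ⟨ω, hω, rfl⟩
    rw [expr_eq_aux β hβ0 hβ1]
    have hsin : (Real.sin ω)^2 ≤ 1 := Real.sin_sq_le_one ω
    have hD1 : (1 - β)^2 + 4*β*(Real.sin ω)^2 ≤ (1+β)^2 := by nlinarith
    have hDpos : 0 < (1 - β)^2 + 4*β*(Real.sin ω)^2 := by nlinarith
    have hle : Real.sqrt ((1 - β)^2 + 4*β*(Real.sin ω)^2) ≤ 1 + β := by
      calc Real.sqrt ((1 - β)^2 + 4*β*(Real.sin ω)^2)
          ≤ Real.sqrt ((1+β)^2) := Real.sqrt_le_sqrt hD1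
        _ = 1 + β := Real.sqrt_sq (by linarith)
    have hpos : 0 < Real.sqrt ((1 - β)^2 + 4*β*(Real.sin ω)^2) :=
      Real.sqrt_pos.mpr hDpos
    gcongr
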